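/- Let S be a finite multiset of points in ℝ^d with empirical mean μ(S) and let S' ⊆ S with |S'| ≥ (1 − ε)|S| for some 0 < ε < 1. Suppose every x ∈ S satisfies ‖x − μ(S)‖₂ ≤ R. Then ‖μ(S') − μ(S)‖₂ ≤ 2εR/(1 − ε). -/

import Mathlib

open scoped BigOperators

/-- The empirical mean of a finite multiset of points in `ℝ^d`. -/
noncomputable def multisetMean {d : ℕ} (S : Multiset (EuclideanSpace ℝ (Fin d))) :
    EuclideanSpace ℝ (Fin d) :=
  ((S.card : ℝ))⁻¹ • S.sum

/-- Let `S` be a (nonempty) finite multiset of points in `ℝ^d` with empirical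
mean `μ(S)`, and let `S' ⊆ S` with `|S'| ≥ (1 − ε)|S|` for some `0 < ε < 1`.  If every
`x ∈ S` satisfies `‖x − μ(S)‖₂ ≤ R`, then `‖μ(S') − μ(S)‖₂ ≤ 2εR/(1 − ε)`. -/
theorem mean_shift_of_removal {d : ℕ} (ε R : ℝ) (hε0 : 0 < ε) (hε1 : ε < 1)
    (S S' : Multiset (EuclideanSpace ℝ (Fin d))) (hne : S ≠ 0) (hsub : S' ≤ S)
    (hcard : (1 - ε) * (S.card : ℝ) ≤ (S'.card : ℝ))
    (hbound : ∀ x ∈ S, ‖x - multisetMean S‖ ≤ R) :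
    ‖multisetMean S' - multisetMean S‖ ≤ 2 * ε * R / (1 - ε) := by
  classical
  set μ := multisetMean S with hμ
  set T := S - S' with hT
  have hST : S' + T = S := add_tsub_cancel_of_le hsub
  set n : ℝ := (S.card : ℝ) with hn
  set m : ℝ := (S'.card : ℝ) with hm
  set t : ℝ := (T.card : ℝ) with ht
  have hε1' : 0 < 1 - ε := by linarith
  have hnpos : 0 < n := by
    have : 0 < S.card := Multiset.card_pos.mpr hne
    rw [hn]; exact_mod_cast this
  have hmpos : 0 < m := lt_of_lt_of_le (by positivity) hcard
  have hnmt : n = m + t := by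
    have := congrArg Multiset.card hST
    rw [Multiset.card_add] at this
    rw [hn, hm, ht, ← this]; push_cast; ring
  have hmne : m ≠ 0 := ne_of_gt hmpos
  have hnne : n ≠ 0 := ne_of_gt hnpos
  -- f x = x - μ
  set f : EuclideanSpace ℝ (Fin d) → EuclideanSpace ℝ (Fin d) := fun x => x - μ with hf
  have hmapsum : ∀ (A : Multiset (EuclideanSpace ℝ (Fin d))),
      (A.map f).sum = A.sum - (A.card : ℝ) • μ := by
    intro A
    induction A using Multiset.induction with
    | empty => simp
    | cons a s ih =>
      simp only [Multiset.map_cons, Multiset.sum_cons, Multiset.card_cons, ih]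
      simp only [hf]
      push_cast
      rw [add_smul, one_smul]
      abel
  have hSsum : S.sum = n • μ := by
    rw [hμ, multisetMean, smul_smul, mul_inv_cancel₀ hnne, one_smul]
  have hSzero : (S.map f).sum = 0 := by
    rw [hmapsum, hSsum]; exact sub_self _
  have hsplit : (S'.map f).sum + (T.map f).sum = 0 := by
    rw [← Multiset.sum_add, ← Multiset.map_add, hST, hSzero]
  have hneg : (S'.map f).sum = -(T.map f).sum := eq_neg_of_add_eq_zero_left hsplit
  have hmean : multisetMean S' - μ = m⁻¹ • (S'.map f).sum := by
    rw [hmapsum S', ← hm, smul_sub, smul_smul, inv_mul_cancel₀ hmne, one_smul, multisetMean, ← hm]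
  have hRnn : 0 ≤ R := by
    obtain ⟨x, hx⟩ := Multiset.exists_mem_of_ne_zero hne
    exact le_trans (norm_nonneg _) (hbound x hx)
  have hTsum : ‖(T.map f).sum‖ ≤ t * R := by
    calc ‖(T.map f).sum‖ ≤ ((T.map f).map norm).sum := norm_multiset_sum_le _
    _ ≤ ((T.map f).map norm).card • R := by
        apply Multiset.sum_le_card_nsmul
        intro y hy
        rw [Multiset.mem_map] at hy
        obtain ⟨z, hzy, rfl⟩ := hy
        rw [Multiset.mem_map] at hzy
        obtain ⟨x, hx, rfl⟩ := hzy
        exact hbound x (Multiset.mem_of_le (tsub_le_self) hx)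
    _ = t * R := by rw [Multiset.card_map, Multiset.card_map, nsmul_eq_mul, ht]
  have htle : t ≤ ε * n := by linarith [hcard, hnmt]
  have htnn : 0 ≤ t := by rw [ht]; positivity
  have hnorm : ‖multisetMean S' - μ‖ ≤ m⁻¹ * (t * R) := by
    rw [hmean, norm_smul, Real.norm_eq_abs, abs_of_pos (inv_pos.mpr hmpos), hneg, norm_neg]
    exact mul_le_mul_of_nonneg_left hTsum (inv_nonneg.mpr hmpos.le)
  refine le_trans hnorm ?_
  rw [inv_mul_eq_div, div_le_div_iff₀ hmpos hε1']
  nlinarith [mul_nonneg (mul_nonneg (sub_nonneg.mpr htle) hRnn) hε1'.le,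
    mul_nonneg (mul_nonneg (sub_nonneg.mpr hcard) hε0.le) hRnn,
    mul_nonneg (mul_nonneg hε0.le hRnn) hmpos.le]
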